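/- arXiv:2603.04086 — 4 statements merged into one kernel-verified Lean document; each statement's English description precedes it below -/
import Mathlib

section
/- For p ≥ 2 and f, g ∈ L^p(Ω), the identity ‖w(p,f,g)(f−g)‖_{L²(Ω)}² = ‖f‖_{L^p}^p + (p−1)‖g‖_{L^p}^p − p ∫_Ω |g|^{p−2} g f holds, where w(p,f,g)² = p(p−1)∫_0^1 s |s g + (1−s) f|^{p−2} ds. -/
open MeasureTheory Real

lemma sq_rpow_half (y c : ℝ) : ((y^2 : ℝ)) ^ (c/2) = |y| ^ c := by
  have h2 : (y^2 : ℝ) = |y| ^ (2:ℝ) := by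
    rw [show ((2:ℝ)) = ((2:ℕ):ℝ) by norm_num, Real.rpow_natCast, sq_abs]
  rw [h2, ← Real.rpow_mul (abs_nonneg y), show (2:ℝ)*(c/2) = c by ring]

lemma cont_abs_rpow {c : ℝ} (hc : 0 ≤ c) : Continuous (fun y : ℝ => |y| ^ c) :=
  continuous_abs.rpow_const (fun _ => Or.inr hc)

lemma lemA {p : ℝ} (hp : 2 ≤ p) (x : ℝ) :
    HasDerivAt (fun y : ℝ => |y| ^ p) (p * |x| ^ (p-2) * x) x := by
  have h1 : HasDerivAt (fun y : ℝ => y^2) (2*x) x := by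
    simpa using hasDerivAt_pow 2 x
  have h3 : HasDerivAt (fun y : ℝ => (y^2) ^ (p/2)) ((2*x) * (p/2) * (x^2) ^ (p/2 - 1)) x :=
    h1.rpow_const (Or.inr (by linarith))
  have hfun : (fun y : ℝ => (y^2) ^ (p/2)) = fun y : ℝ => |y| ^ p := by
    funext y; exact sq_rpow_half y p
  rw [hfun] at h3
  have hval : (2*x) * (p/2) * (x^2) ^ (p/2 - 1) = p * |x| ^ (p-2) * x := by
    rw [show p/2 - 1 = (p-2)/2 by ring, sq_rpow_half x (p-2)]
    ring
  rwa [hval] at h3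

lemma lemB {p : ℝ} (hp : 2 ≤ p) (x : ℝ) :
    HasDerivAt (fun y : ℝ => |y| ^ (p-2) * y) ((p-1) * |x| ^ (p-2)) x := by
  rcases lt_trichotomy x 0 with hx | hx | hx
  · have hneg : HasDerivAt (fun y : ℝ => -y) (-1) x := (hasDerivAt_id x).neg
    have h1 : HasDerivAt (fun y : ℝ => (-y) ^ (p-1)) ((-1) * (p-1) * (-x) ^ (p-1-1)) x :=
      hneg.rpow_const (Or.inl (by simpa using hx.ne))
    have h2 := h1.neg
    have hval : -((-1) * (p-1) * (-x) ^ (p-1-1)) = (p-1) * |x| ^ (p-2) := by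
      rw [show p-1-1 = p-2 by ring, abs_of_neg hx]; ring
    rw [hval] at h2
    apply h2.congr_of_eventuallyEq
    filter_upwards [isOpen_Iio.eventually_mem (show x ∈ Set.Iio (0:ℝ) from hx)] with y hy
    have hy' : y < 0 := hy
    rw [abs_of_neg hy', show (-y) ^ (p-2) * y = -((-y)^(p-2) * (-y)) by ring,
      ← Real.rpow_add_one (by simpa using hy'.ne) (p-2), show p-2+1 = p-1 by ring]
    rfl
  · subst hx
    rcases eq_or_lt_of_le hp with hp2 | hp2
    · have : (fun y : ℝ => |y| ^ (p-2) * y) = fun y : ℝ => y := by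
        funext y; rw [← hp2]; norm_num
      rw [this, ← hp2]
      norm_num
      exact hasDerivAt_id 0
    · rw [hasDerivAt_iff_tendsto_slope]
      have hsl : ∀ᶠ y in nhdsWithin (0:ℝ) {(0:ℝ)}ᶜ,
          slope (fun y : ℝ => |y| ^ (p-2) * y) 0 y = |y| ^ (p-2) := by
        filter_upwards [self_mem_nhdsWithin] with y hy
        have hy' : y ≠ 0 := hy
        simp [slope, hy']
        field_simp
      rw [Filter.tendsto_congr' hsl]
      have hval : (p-1) * |(0:ℝ)| ^ (p-2) = |(0:ℝ)| ^ (p-2) := by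
        rw [abs_zero, Real.zero_rpow (by linarith)]; ring
      rw [hval]
      exact ((cont_abs_rpow (by linarith : (0:ℝ) ≤ p-2)).tendsto 0).mono_left
        nhdsWithin_le_nhds
  · have h1 : HasDerivAt (fun y : ℝ => y ^ (p-1)) ((p-1) * x ^ (p-1-1)) x :=
      Real.hasDerivAt_rpow_const (Or.inl hx.ne')
    have hval : (p-1) * x ^ (p-1-1) = (p-1) * |x| ^ (p-2) := by
      rw [show p-1-1 = p-2 by ring, abs_of_pos hx]
    rw [hval] at h1
    apply h1.congr_of_eventuallyEq
    filter_upwards [isOpen_Ioi.eventually_mem (show x ∈ Set.Ioi (0:ℝ) from hx)] with y hy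
    have hy' : (0:ℝ) < y := hy
    rw [abs_of_pos hy', ← Real.rpow_add_one hy'.ne' (p-2), show p-2+1 = p-1 by ring]

lemma ptwise {p : ℝ} (hp : 2 ≤ p) (a b : ℝ) :
    (p * (p - 1) * ∫ s in Set.Ioo (0:ℝ) 1, s * |s * a + (1 - s) * b| ^ (p - 2)) * (b - a) ^ 2
      = |b| ^ p + (p - 1) * |a| ^ p - p * (|a| ^ (p - 2) * a * b) := by
  have hp2 : (0:ℝ) ≤ p - 2 := by linarith
  have hu : ∀ t : ℝ, HasDerivAt (fun t : ℝ => t * a + (1 - t) * b) (a - b) t := by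
    intro t
    have h1 : HasDerivAt (fun t : ℝ => t * a) a t := by simpa using (hasDerivAt_id t).mul_const a
    have h2 : HasDerivAt (fun t : ℝ => (1 - t) * b) (-b) t := by
      simpa using ((hasDerivAt_const t (1:ℝ)).sub (hasDerivAt_id t)).mul_const b
    have := h1.add h2
    convert this using 1 <;> first | rfl | ring
  have cu : Continuous (fun t : ℝ => t * a + (1 - t) * b) := by continuity
  have cabs : Continuous (fun t : ℝ => |t * a + (1 - t) * b| ^ (p - 2)) :=
    (cont_abs_rpow hp2).comp cu
  have cG : Continuous (fun t : ℝ => |t * a + (1 - t) * b| ^ (p - 2) * (t * a + (1 - t) * b)) :=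
    cabs.mul cu
  -- FTC
  have hdF : ∀ t : ℝ, HasDerivAt (fun t : ℝ => |t * a + (1 - t) * b| ^ p)
      ((p * (|t * a + (1 - t) * b| ^ (p - 2) * (t * a + (1 - t) * b))) * (a - b)) t := by
    intro t
    have := (lemA hp (t * a + (1 - t) * b)).comp t (hu t)
    simpa [Function.comp_def, mul_assoc] using this
  have hE1 : ∫ t in (0:ℝ)..1,
      (p * (a - b)) * (|t * a + (1 - t) * b| ^ (p - 2) * (t * a + (1 - t) * b))
      = |a| ^ p - |b| ^ p := by
    have h := intervalIntegral.integral_eq_sub_of_hasDerivAt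
      (f := fun t : ℝ => |t * a + (1 - t) * b| ^ p)
      (f' := fun t : ℝ => (p * (|t * a + (1 - t) * b| ^ (p - 2) * (t * a + (1 - t) * b))) * (a - b))
      (a := 0) (b := 1) (fun t _ => hdF t)
      (((continuous_const.mul cG).mul continuous_const).intervalIntegrable 0 1)
    have he : (fun t : ℝ =>
        (p * (|t * a + (1 - t) * b| ^ (p - 2) * (t * a + (1 - t) * b))) * (a - b))
        = fun t : ℝ =>
        (p * (a - b)) * (|t * a + (1 - t) * b| ^ (p - 2) * (t * a + (1 - t) * b)) := by
      funext t; ring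
    rw [he] at h
    rw [h]
    norm_num
  -- integration by parts
  have hdG : ∀ t : ℝ, HasDerivAt
      (fun t : ℝ => |t * a + (1 - t) * b| ^ (p - 2) * (t * a + (1 - t) * b))
      (((p - 1) * (a - b)) * |t * a + (1 - t) * b| ^ (p - 2)) t := by
    intro t
    have := (lemB hp (t * a + (1 - t) * b)).comp t (hu t)
    have he : ((p - 1) * |t * a + (1 - t) * b| ^ (p - 2)) * (a - b)
        = ((p - 1) * (a - b)) * |t * a + (1 - t) * b| ^ (p - 2) := by ring
    simpa [Function.comp_def, he] using this
  have hE2 : ∫ t in (0:ℝ)..1, t * (((p - 1) * (a - b)) * |t * a + (1 - t) * b| ^ (p - 2))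
      = (1 : ℝ) * (|1 * a + (1 - 1) * b| ^ (p - 2) * (1 * a + (1 - 1) * b))
        - (0 : ℝ) * (|0 * a + (1 - 0) * b| ^ (p - 2) * (0 * a + (1 - 0) * b))
        - ∫ t in (0:ℝ)..1,
            (1 : ℝ) * (|t * a + (1 - t) * b| ^ (p - 2) * (t * a + (1 - t) * b)) :=
    intervalIntegral.integral_mul_deriv_eq_deriv_mul
      (u := fun t : ℝ => t) (u' := fun _ : ℝ => (1:ℝ))
      (v := fun t : ℝ => |t * a + (1 - t) * b| ^ (p - 2) * (t * a + (1 - t) * b))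
      (fun t _ => hasDerivAt_id t) (fun t _ => hdG t)
      ((continuous_const).intervalIntegrable 0 1)
      ((continuous_const.mul cabs).intervalIntegrable 0 1)
  -- rewrite integrals
  have hIoo : ∫ s in Set.Ioo (0:ℝ) 1, s * |s * a + (1 - s) * b| ^ (p - 2)
      = ∫ s in (0:ℝ)..1, s * |s * a + (1 - s) * b| ^ (p - 2) := by
    rw [intervalIntegral.integral_of_le zero_le_one,
      MeasureTheory.integral_Ioc_eq_integral_Ioo]
  rw [hIoo]
  set I := ∫ s in (0:ℝ)..1, s * |s * a + (1 - s) * b| ^ (p - 2) with hI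
  set J := ∫ t in (0:ℝ)..1, |t * a + (1 - t) * b| ^ (p - 2) * (t * a + (1 - t) * b) with hJ
  rw [intervalIntegral.integral_const_mul] at hE1
  have he2 : (fun t : ℝ => t * (((p - 1) * (a - b)) * |t * a + (1 - t) * b| ^ (p - 2)))
      = fun t : ℝ => ((p - 1) * (a - b)) * (t * |t * a + (1 - t) * b| ^ (p - 2)) := by
    funext t; ring
  rw [he2, intervalIntegral.integral_const_mul] at hE2
  simp only [one_mul, zero_mul, sub_zero] at hE2
  norm_num at hE2
  -- hE2 : (p-1)*(a-b) * I = |a|^(p-2) * a - J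
  have h3 : |a| ^ (p - 2) * a * a = |a| ^ p := by
    rcases eq_or_ne a 0 with h | h
    · subst h
      rw [abs_zero, Real.zero_rpow (by linarith : p ≠ 0)]
      ring
    · have ha : |a| ≠ 0 := abs_ne_zero.mpr h
      rw [mul_assoc, ← abs_mul_abs_self a, ← mul_assoc,
        ← Real.rpow_add_one ha (p - 2), ← Real.rpow_add_one ha (p - 2 + 1)]
      congr 1
      ring
  linear_combination (p * (a - b)) * hE2 - hE1 + p * h3

/-- Proposition 2.1 in [DA]: the fundamental $L^p$ identity. -/
theorem lp_identity {N : ℕ} (Ω : Set (Fin N → ℝ)) (hΩ : MeasurableSet Ω)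
    (p : ℝ) (hp : 2 ≤ p) (f g : (Fin N → ℝ) → ℝ)
    (hf : MemLp f (ENNReal.ofReal p) (volume.restrict Ω))
    (hg : MemLp g (ENNReal.ofReal p) (volume.restrict Ω)) :
    ∫ x in Ω, (p * (p - 1) *
        ∫ s in Set.Ioo (0:ℝ) 1, s * |s * g x + (1 - s) * f x| ^ (p - 2)) *
        (f x - g x) ^ 2
      = (∫ x in Ω, |f x| ^ p) + (p - 1) * (∫ x in Ω, |g x| ^ p)
        - p * ∫ x in Ω, |g x| ^ (p - 2) * g x * f x := by
  have hp0 : (0:ℝ) < p := by linarith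
  have hp1 : (0:ℝ) < p - 1 := by linarith
  have hP0 : (ENNReal.ofReal p) ≠ 0 := by
    simp [ENNReal.ofReal_eq_zero]; linarith
  have hPtop : (ENNReal.ofReal p) ≠ ⊤ := ENNReal.ofReal_ne_top
  have hPreal : (ENNReal.ofReal p).toReal = p := ENNReal.toReal_ofReal hp0.le
  set μ := volume.restrict Ω with hμ
  have hIf : Integrable (fun x => |f x| ^ p) μ := by
    have := hf.integrable_norm_rpow hP0 hPtop
    simpa [hPreal, Real.norm_eq_abs] using this
  have hIg : Integrable (fun x => |g x| ^ p) μ := by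
    have := hg.integrable_norm_rpow hP0 hPtop
    simpa [hPreal, Real.norm_eq_abs] using this
  -- the cross term is integrable by Hölder
  set q := ENNReal.ofReal (p - 1) with hq
  have hq0 : q ≠ 0 := by simp [hq, ENNReal.ofReal_eq_zero]; linarith
  have hqtop : q ≠ ⊤ := ENNReal.ofReal_ne_top
  have hqreal : q.toReal = p - 1 := ENNReal.toReal_ofReal hp1.le
  have hφmem : MemLp (fun x => |g x| ^ (p - 2) * g x) (ENNReal.ofReal p / q) μ := by
    have h1 : MemLp (fun x => ‖g x‖ ^ q.toReal) (ENNReal.ofReal p / q) μ :=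
      hg.norm_rpow_div q
    refine h1.of_le ?_ ?_
    · have hgm := hg.aestronglyMeasurable.aemeasurable
      have hgabs : AEMeasurable (fun x => |g x|) μ := measurable_abs.comp_aemeasurable hgm
      exact ((hgabs.pow_const (p - 2)).mul hgm).aestronglyMeasurable
    · refine Filter.Eventually.of_forall fun x => ?_
      rw [hqreal, Real.norm_eq_abs, Real.norm_eq_abs, Real.norm_eq_abs, abs_mul,
        abs_of_nonneg (Real.rpow_nonneg (abs_nonneg _) _),
        abs_of_nonneg (Real.rpow_nonneg (abs_nonneg _) _)]
      rcases eq_or_ne (g x) 0 with h | h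
      · rw [h, abs_zero, Real.zero_rpow (by linarith : p - 1 ≠ 0)]
        simp
      · rw [← Real.rpow_add_one (abs_ne_zero.mpr h) (p - 2),
          show p - 2 + 1 = p - 1 by ring]
  have hone : (1:ENNReal) / 1 = 1 / (ENNReal.ofReal p / q) + 1 / (ENNReal.ofReal p) := by
    have h1 : (1:ENNReal) / (ENNReal.ofReal p / q) = q / ENNReal.ofReal p := by
      rw [one_div, ENNReal.inv_div (Or.inl hqtop) (Or.inl hq0)]
    rw [h1, ENNReal.div_add_div_same]
    have h2 : q + 1 = ENNReal.ofReal p := by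
      rw [hq, ← ENNReal.ofReal_one, ← ENNReal.ofReal_add hp1.le zero_le_one]
      norm_num
    rw [h2, ENNReal.div_self hP0 hPtop]
    simp
  have hmul : MemLp ((fun x => |g x| ^ (p - 2) * g x) • f) 1 μ := hf.smul hφmem (hpqr := ⟨by simpa only [one_div] using hone.symm⟩)
  have hcross : Integrable (fun x => |g x| ^ (p - 2) * g x * f x) μ := by
    have := memLp_one_iff_integrable.mp hmul
    simpa [Pi.smul_apply, smul_eq_mul, Pi.mul_def] using this
  have hpt : ∀ x, (p * (p - 1) *
        ∫ s in Set.Ioo (0:ℝ) 1, s * |s * g x + (1 - s) * f x| ^ (p - 2)) *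
        (f x - g x) ^ 2
      = |f x| ^ p + (p - 1) * |g x| ^ p - p * (|g x| ^ (p - 2) * g x * f x) :=
    fun x => ptwise hp (g x) (f x)
  rw [MeasureTheory.integral_congr_ae (Filter.Eventually.of_forall hpt)]
  rw [MeasureTheory.integral_sub (μ := μ)
      (f := fun x => |f x| ^ p + (p - 1) * |g x| ^ p)
      (g := fun x => p * (|g x| ^ (p - 2) * g x * f x))
      (hIf.add (hIg.const_mul (p - 1))) (hcross.const_mul p),
    MeasureTheory.integral_add (μ := μ) (f := fun x => |f x| ^ p)
      (g := fun x => (p - 1) * |g x| ^ p) hIf (hIg.const_mul (p - 1)),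
    MeasureTheory.integral_const_mul, MeasureTheory.integral_const_mul]
end

section
/- For real numbers a, b with p ≥ 2, the pointwise identity |a|^p + (p−1)|b|^p − p |b|^{p−2} b a = p(p−1) (a−b)² ∫_0^1 s |s b + (1−s) a|^{p−2} ds holds; in particular the left-hand side is nonnegative, with equality if and only if a = b. -/
open Real Filter MeasureTheory
open scoped ENNReal

lemma cont_abs_rpow' (q : ℝ) (hq : 0 ≤ q) : Continuous (fun x : ℝ => |x| ^ q) := by
  rw [continuous_iff_continuousAt]
  intro x
  exact (Real.continuousAt_rpow_const _ q (Or.inr hq)).comp continuous_abs.continuousAt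

lemma hasDerivAt_abs_rpow_mul' (p : ℝ) (hp : 2 ≤ p) (x : ℝ) :
    HasDerivAt (fun y : ℝ => |y| ^ (p - 2) * y) ((p - 1) * |x| ^ (p - 2)) x := by
  rcases lt_trichotomy x 0 with hx | hx | hx
  · have h1 : HasDerivAt (fun y : ℝ => -((-y) ^ (p - 1))) ((p - 1) * |x| ^ (p - 2)) x := by
      have h0 : HasDerivAt (fun y : ℝ => (-y) ^ (p - 1))
          ((p - 1) * (-x) ^ (p - 1 - 1) * (-1)) x :=
        (Real.hasDerivAt_rpow_const (Or.inl (neg_ne_zero.mpr hx.ne))).comp x (hasDerivAt_neg x)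
      have := h0.neg
      rw [abs_of_neg hx]
      rw [show (p - 1) * (-x) ^ (p - 2) = -((p - 1) * (-x) ^ (p - 1 - 1) * -1) by
        rw [show p - 1 - 1 = p - 2 by ring]; ring]
      exact this
    refine h1.congr_of_eventuallyEq ?_
    filter_upwards [Iio_mem_nhds hx] with y hy
    rw [abs_of_neg hy, show p - 1 = (p - 2) + 1 by ring,
      Real.rpow_add_one (neg_ne_zero.mpr hy.ne)]
    ring
  · subst hx
    rcases eq_or_lt_of_le hp with hp2 | hp2
    · have heq : (fun y : ℝ => |y| ^ (p - 2) * y) = fun y : ℝ => y := by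
        funext y
        rw [← hp2]; norm_num
      rw [heq, ← hp2]
      norm_num
      exact hasDerivAt_id (0:ℝ)
    · have hz : |(0:ℝ)| ^ (p - 2) = 0 := by
        rw [abs_zero, Real.zero_rpow (by linarith)]
      rw [hz, mul_zero]
      rw [hasDerivAt_iff_tendsto_slope]
      have ht : Tendsto (fun y : ℝ => |y| ^ (p - 2)) (nhdsWithin 0 {(0:ℝ)}ᶜ) (nhds 0) := by
        have := (cont_abs_rpow' (p - 2) (by linarith)).tendsto 0
        rw [show |(0:ℝ)| ^ (p-2) = 0 from hz] at this
        exact this.mono_left nhdsWithin_le_nhds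
      refine ht.congr' ?_
      filter_upwards [self_mem_nhdsWithin] with y hy
      have hy0 : y ≠ 0 := hy
      rw [slope_def_field]
      field_simp
      simp
  · have h1 : HasDerivAt (fun y : ℝ => y ^ (p - 1)) ((p - 1) * |x| ^ (p - 2)) x := by
      have h0 := Real.hasDerivAt_rpow_const (p := p - 1) (Or.inl hx.ne')
      rw [abs_of_pos hx]
      convert h0 using 2
      ring
    refine h1.congr_of_eventuallyEq ?_
    filter_upwards [Ioi_mem_nhds hx] with y hy
    rw [abs_of_pos hy, show p - 1 = (p - 2) + 1 by ring, Real.rpow_add_one hy.ne']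

lemma abs_rpow_mul_self (p : ℝ) (hp : 2 ≤ p) (b : ℝ) :
    |b| ^ (p - 2) * b * b = |b| ^ p := by
  rcases eq_or_ne b 0 with rfl | hb
  · rw [abs_zero, Real.zero_rpow (by positivity : p ≠ 0)]
    ring
  · rw [mul_assoc, ← sq, ← sq_abs, ← Real.rpow_two, ← Real.rpow_add (abs_pos.mpr hb)]
    norm_num

lemma key_identity (p : ℝ) (hp : 2 ≤ p) (a b : ℝ) :
    |a| ^ p + (p - 1) * |b| ^ p - p * (|b| ^ (p - 2) * b) * a
      = p * (p - 1) * (a - b) ^ 2 *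
        ∫ s in Set.Ioo (0:ℝ) 1, s * |s * b + (1 - s) * a| ^ (p - 2) := by
  have hp1 : (1:ℝ) < p := by linarith
  have hL : ∀ s : ℝ, HasDerivAt (fun s : ℝ => s * b + (1 - s) * a) (b - a) s := by
    intro s
    have h1 : HasDerivAt (fun s : ℝ => s * b) b s := hasDerivAt_mul_const b
    have h2 : HasDerivAt (fun s : ℝ => (1 - s) * a) (-1 * a) s :=
      ((hasDerivAt_id s).const_sub 1).mul_const a
    have h3 := h1.add h2
    rw [show b - a = b + -1 * a by ring]
    exact h3
  have hLc : Continuous (fun s : ℝ => s * b + (1 - s) * a) := by fun_prop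
  have hψ : ∀ s : ℝ, HasDerivAt (fun t : ℝ => |t * b + (1 - t) * a| ^ p)
      (p * (b - a) * (|s * b + (1 - s) * a| ^ (p - 2) * (s * b + (1 - s) * a))) s := by
    intro s
    have h := (hasDerivAt_abs_rpow (s * b + (1 - s) * a) hp1).comp s (hL s)
    rw [show p * (b - a) * (|s * b + (1 - s) * a| ^ (p - 2) * (s * b + (1 - s) * a))
      = p * |s * b + (1 - s) * a| ^ (p - 2) * (s * b + (1 - s) * a) * (b - a) by ring]
    exact h
  have hψ' : ∀ s : ℝ, HasDerivAt
      (fun t : ℝ => p * (b - a) * (|t * b + (1 - t) * a| ^ (p - 2) * (t * b + (1 - t) * a)))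
      (p * (p - 1) * (a - b) ^ 2 * |s * b + (1 - s) * a| ^ (p - 2)) s := by
    intro s
    have h := ((hasDerivAt_abs_rpow_mul' p hp (s * b + (1 - s) * a)).comp s
      (hL s)).const_mul (p * (b - a))
    rw [show p * (p - 1) * (a - b) ^ 2 * |s * b + (1 - s) * a| ^ (p - 2)
      = p * (b - a) * ((p - 1) * |s * b + (1 - s) * a| ^ (p - 2) * (b - a)) by ring]
    exact h
  have hcont' : Continuous (fun t : ℝ =>
      p * (b - a) * (|t * b + (1 - t) * a| ^ (p - 2) * (t * b + (1 - t) * a))) :=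
    continuous_const.mul (((cont_abs_rpow' (p - 2) (by linarith)).comp hLc).mul hLc)
  have hcont'' : Continuous (fun t : ℝ =>
      p * (p - 1) * (a - b) ^ 2 * |t * b + (1 - t) * a| ^ (p - 2)) :=
    continuous_const.mul ((cont_abs_rpow' (p - 2) (by linarith)).comp hLc)
  have hIBP := intervalIntegral.integral_mul_deriv_eq_deriv_mul
      (u := fun x : ℝ => x) (u' := fun _ : ℝ => (1:ℝ))
      (fun x _ => hasDerivAt_id x) (fun x _ => hψ' x)
      intervalIntegrable_const (hcont''.intervalIntegrable 0 1)
  have hFTC := intervalIntegral.integral_eq_sub_of_hasDerivAt (fun x _ => hψ x)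
      (hcont'.intervalIntegrable 0 1)
  simp only [one_mul, zero_mul] at hIBP
  rw [hFTC] at hIBP
  have e1 : (∫ x in (0:ℝ)..1, x * (p * (p - 1) * (a - b) ^ 2 * |x * b + (1 - x) * a| ^ (p - 2)))
      = p * (p - 1) * (a - b) ^ 2 * ∫ x in (0:ℝ)..1, x * |x * b + (1 - x) * a| ^ (p - 2) := by
    rw [← intervalIntegral.integral_const_mul]
    apply intervalIntegral.integral_congr
    intro x _
    ring
  have e2 : (∫ x in (0:ℝ)..1, x * |x * b + (1 - x) * a| ^ (p - 2))
      = ∫ s in Set.Ioo (0:ℝ) 1, s * |s * b + (1 - s) * a| ^ (p - 2) := by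
    rw [intervalIntegral.integral_of_le zero_le_one,
      MeasureTheory.integral_Ioc_eq_integral_Ioo]
  rw [e1, e2] at hIBP
  norm_num at hIBP
  have hb := abs_rpow_mul_self p hp b
  linear_combination -hIBP - p * hb

/-- Pointwise version of the fundamental $L^p$ identity: for `p ≥ 2` and real `a, b`,
`|a|^p + (p-1)|b|^p - p|b|^{p-2}b a = p(p-1)(a-b)^2 ∫₀¹ s|sb+(1-s)a|^{p-2} ds`,
the left-hand side is nonnegative, and it vanishes iff `a = b`. -/
theorem pointwise_lp_identity (p : ℝ) (hp : 2 ≤ p) (a b : ℝ) :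
    |a| ^ p + (p - 1) * |b| ^ p - p * (|b| ^ (p - 2) * b) * a
      = p * (p - 1) * (a - b) ^ 2 *
        ∫ s in Set.Ioo (0:ℝ) 1, s * |s * b + (1 - s) * a| ^ (p - 2)
    ∧ 0 ≤ |a| ^ p + (p - 1) * |b| ^ p - p * (|b| ^ (p - 2) * b) * a
    ∧ (|a| ^ p + (p - 1) * |b| ^ p - p * (|b| ^ (p - 2) * b) * a = 0 ↔ a = b) := by
  have key := key_identity p hp a b
  have hInn : (0:ℝ) ≤ ∫ s in Set.Ioo (0:ℝ) 1, s * |s * b + (1 - s) * a| ^ (p - 2) :=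
    MeasureTheory.setIntegral_nonneg measurableSet_Ioo
      (fun s hs => mul_nonneg hs.1.le (Real.rpow_nonneg (abs_nonneg _) _))
  refine ⟨key, ?_, ?_, ?_⟩
  · rw [key]
    have hc : (0:ℝ) ≤ p * (p - 1) * (a - b) ^ 2 :=
      mul_nonneg (mul_nonneg (by linarith) (by linarith)) (sq_nonneg _)
    exact mul_nonneg hc hInn
  · intro h0
    by_contra hab
    rw [key] at h0
    have hab' : a - b ≠ 0 := sub_ne_zero_of_ne hab
    have hsq : (0:ℝ) < (a - b) ^ 2 :=
      lt_of_le_of_ne (sq_nonneg _) (Ne.symm (pow_ne_zero 2 hab'))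
    have hc : (0:ℝ) < p * (p - 1) * (a - b) ^ 2 :=
      mul_pos (mul_pos (by linarith) (by linarith)) hsq
    have hI0 : (∫ s in Set.Ioo (0:ℝ) 1, s * |s * b + (1 - s) * a| ^ (p - 2)) = 0 := by
      rcases mul_eq_zero.mp h0 with h | h
      · exact absurd h hc.ne'
      · exact h
    have hIpos : (0:ℝ) < ∫ s in Set.Ioo (0:ℝ) 1, s * |s * b + (1 - s) * a| ^ (p - 2) := by
      have hae : 0 ≤ᵐ[volume.restrict (Set.Ioo (0:ℝ) 1)]
          fun s => s * |s * b + (1 - s) * a| ^ (p - 2) :=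
        (MeasureTheory.ae_restrict_iff' measurableSet_Ioo).mpr
          (Filter.Eventually.of_forall fun s hs =>
            mul_nonneg hs.1.le (Real.rpow_nonneg (abs_nonneg _) _))
      have hcf : Continuous (fun s : ℝ => s * |s * b + (1 - s) * a| ^ (p - 2)) := by
        apply continuous_id.mul
        exact (cont_abs_rpow' (p - 2) (by linarith)).comp (by fun_prop)
      have hint : MeasureTheory.IntegrableOn
          (fun s : ℝ => s * |s * b + (1 - s) * a| ^ (p - 2)) (Set.Ioo 0 1) volume :=
        (hcf.intervalIntegrable 0 1).1.mono_set Set.Ioo_subset_Ioc_self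
      rw [MeasureTheory.setIntegral_pos_iff_support_of_nonneg_ae hae hint]
      have hsub : Set.Ioo (0:ℝ) 1 \ {a / (a - b)} ⊆
          Function.support (fun s : ℝ => s * |s * b + (1 - s) * a| ^ (p - 2))
            ∩ Set.Ioo 0 1 := by
        rintro s ⟨hs, hs0⟩
        refine ⟨?_, hs⟩
        have hbase : s * b + (1 - s) * a ≠ 0 := by
          intro hz
          apply hs0
          rw [Set.mem_singleton_iff, eq_div_iff hab']
          linear_combination -hz
        have hpos : (0:ℝ) < s * |s * b + (1 - s) * a| ^ (p - 2) :=
          mul_pos hs.1 (Real.rpow_pos_of_pos (abs_pos.mpr hbase) _)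
        exact hpos.ne'
      calc (0:ℝ≥0∞) < volume (Set.Ioo (0:ℝ) 1 \ {a / (a - b)}) := by
            rw [measure_diff_null (measure_singleton _)]
            simp [Real.volume_Ioo]
        _ ≤ _ := measure_mono hsub
    exact absurd hI0 hIpos.ne'
  · intro h
    subst h
    have hb := abs_rpow_mul_self p hp a
    linear_combination -p * hb
end

section
/- Let Q > 2, p ≥ 2, θ ∈ ℝ, and define h(λ) = (1+λ²)^{−1/2} [ (Q/(Q−2))² + (pθ(pθ−2Q)/(Q−2)²) λ²/(1+λ²) ] for λ ∈ ℝ. If pθ ∈ [(1−√(3/2))Q, (1+√(3/2))Q], then sup_{λ∈ℝ} h(λ) = (Q/(Q−2))², attained at λ = 0. -/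
open Real

/-- Maximization of `h(λ) = (1+λ²)^{-1/2}[(Q/(Q-2))² + (pθ(pθ-2Q)/(Q-2)²) λ²/(1+λ²)]`:
if `pθ ∈ [(1-√(3/2))Q, (1+√(3/2))Q]`, the supremum is `(Q/(Q-2))²`, attained at `λ = 0`. -/
theorem koranyi_weight_sup (Q p θ : ℝ) (hQ : 2 < Q) (hp : 2 ≤ p)
    (h1 : (1 - Real.sqrt (3/2)) * Q ≤ p * θ)
    (h2 : p * θ ≤ (1 + Real.sqrt (3/2)) * Q) :
    (fun l : ℝ => (1 / Real.sqrt (1 + l ^ 2)) *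
        ((Q / (Q - 2)) ^ 2 +
          (p * θ * (p * θ - 2 * Q) / (Q - 2) ^ 2) * (l ^ 2 / (1 + l ^ 2)))) 0
      = (Q / (Q - 2)) ^ 2
    ∧ ∀ l : ℝ, (1 / Real.sqrt (1 + l ^ 2)) *
        ((Q / (Q - 2)) ^ 2 +
          (p * θ * (p * θ - 2 * Q) / (Q - 2) ^ 2) * (l ^ 2 / (1 + l ^ 2)))
      ≤ (Q / (Q - 2)) ^ 2 := by
  have hr : Real.sqrt (3/2) ^ 2 = 3/2 := Real.sq_sqrt (by norm_num)
  have hQ0 : (0:ℝ) < Q := by linarith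
  have key : 2 * (p * θ * (p * θ - 2 * Q)) ≤ Q ^ 2 := by
    nlinarith [mul_nonneg (sub_nonneg.mpr h1) (sub_nonneg.mpr h2)]
  constructor
  · norm_num
  · intro l
    have hd : (0:ℝ) < (Q - 2) ^ 2 := pow_pos (by linarith) 2
    set s := Real.sqrt (1 + l ^ 2) with hs
    have hs2 : s ^ 2 = 1 + l ^ 2 := Real.sq_sqrt (by nlinarith [sq_nonneg l])
    have hsn : 0 ≤ s := Real.sqrt_nonneg _
    have hs1 : 1 ≤ s := by nlinarith [sq_nonneg l, sq_nonneg (s - 1)]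
    have hs0 : (0:ℝ) < s := by linarith
    have t1 : 0 ≤ (Q ^ 2 - 2 * (p * θ * (p * θ - 2 * Q))) * (s ^ 2 - 1) := by
      apply mul_nonneg <;> nlinarith
    have t2 : 0 ≤ Q ^ 2 * ((s - 1) * (s - 1) * (2 * s + 1)) :=
      mul_nonneg (sq_nonneg Q) (mul_nonneg (mul_self_nonneg (s - 1)) (by linarith))
    have key2 : Q ^ 2 * s ^ 2 + (p * θ * (p * θ - 2 * Q)) * (s ^ 2 - 1)
        ≤ Q ^ 2 * s ^ 3 := by nlinarith [t1, t2]
    have h1s : 1 + l ^ 2 = s ^ 2 := hs2.symm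
    have hl2 : l ^ 2 = s ^ 2 - 1 := by linarith
    rw [h1s, hl2]
    have hQ2 : Q - 2 ≠ 0 := by linarith
    have hp1 : (0:ℝ) < (Q - 2) ^ 2 * s ^ 3 := mul_pos hd (pow_pos hs0 3)
    rw [div_pow]
    have e1 : 1 / s * (Q ^ 2 / (Q - 2) ^ 2 +
        p * θ * (p * θ - 2 * Q) / (Q - 2) ^ 2 * ((s ^ 2 - 1) / s ^ 2))
        = (Q ^ 2 * s ^ 2 + p * θ * (p * θ - 2 * Q) * (s ^ 2 - 1)) / ((Q - 2) ^ 2 * s ^ 3) := by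
      field_simp
    rw [e1, div_le_div_iff₀ hp1 hd]
    nlinarith [mul_le_mul_of_nonneg_right key2 hd.le]
end

section
/- Let Q > 2, p ≥ 2, θ ≥ 0 with Q ≥ 4pθ/(12−π²), and define on [−2π,2π] the function g(ν) = 2(Q/(Q−2))² (1−cos ν)/ν² + (2pθ/(Q−2))² ((ν−sin ν)/ν²)² − (4pθQ/(Q−2)²) ((ν−sin ν)/ν²)((1−cos ν)/ν), extended continuously at ν=0 by g(0) = (Q/(Q−2))². Then sup_{ν∈[−2π,2π]} g(ν) = (Q/(Q−2))², attained at ν = 0. -/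
open Real

/-- The function `g` appearing in the Carnot–Carathéodory bound in the Heisenberg group,
extended by continuity at `ν = 0` by `g(0) = (Q/(Q-2))²`. -/
noncomputable def gCC (Q p θ : ℝ) (ν : ℝ) : ℝ :=
  if ν = 0 then (Q / (Q - 2)) ^ 2
  else
    2 * (Q / (Q - 2)) ^ 2 * ((1 - Real.cos ν) / ν ^ 2)
      + (2 * p * θ / (Q - 2)) ^ 2 * ((ν - Real.sin ν) / ν ^ 2) ^ 2
      - (4 * p * θ * Q / (Q - 2) ^ 2) * ((ν - Real.sin ν) / ν ^ 2) * ((1 - Real.cos ν) / ν)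

/-- Monotonicity helper: if `f` has derivative `f'` which is nonnegative on `[0, ∞)`,
then `f 0 ≤ f x` for `x ≥ 0`. -/
lemma gCC_mono_aux (f f' : ℝ → ℝ) (hf : ∀ y, HasDerivAt f (f' y) y)
    (h0 : ∀ y, 0 ≤ y → 0 ≤ f' y) {x : ℝ} (hx : 0 ≤ x) : f 0 ≤ f x := by
  have hm : MonotoneOn f (Set.Ici 0) := by
    apply monotoneOn_of_deriv_nonneg (convex_Ici 0)
      (fun y _ => (hf y).continuousAt.continuousWithinAt)
      (fun y _ => (hf y).differentiableAt.differentiableWithinAt)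
    intro y hy
    rw [(hf y).deriv]
    exact h0 y (le_of_lt (by simpa using hy))
  exact hm (Set.self_mem_Ici) hx hx

lemma gCC_sub_sin_le_cube {x : ℝ} (hx : 0 ≤ x) : x - sin x ≤ x ^ 3 / 6 := by
  have h := gCC_mono_aux (fun y => y ^ 3 / 6 - y + sin y) (fun y => y ^ 2 / 2 - 1 + cos y)
    (fun y => by
      have := ((hasDerivAt_pow 3 y).div_const 6).sub (hasDerivAt_id y) |>.add (hasDerivAt_sin y)
      refine this.congr_deriv ?_; ring)
    (fun y hy => by nlinarith [one_sub_sq_div_two_le_cos (x := y)]) hx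
  simp at h; linarith

lemma gCC_cos_le_quartic {x : ℝ} (hx : 0 ≤ x) : cos x ≤ 1 - x ^ 2 / 2 + x ^ 4 / 24 := by
  have h := gCC_mono_aux (fun y => 1 - y ^ 2 / 2 + y ^ 4 / 24 - cos y)
    (fun y => -y + y ^ 3 / 6 + sin y)
    (fun y => by
      have := ((((hasDerivAt_pow 2 y).div_const 2).const_sub 1).add
        ((hasDerivAt_pow 4 y).div_const 24)).sub (hasDerivAt_cos y)
      refine this.congr_deriv ?_; ring)
    (fun y hy => by nlinarith [gCC_sub_sin_le_cube hy]) hx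
  simp at h; linarith

lemma gCC_sin_le_quintic {x : ℝ} (hx : 0 ≤ x) : sin x ≤ x - x ^ 3 / 6 + x ^ 5 / 120 := by
  have h := gCC_mono_aux (fun y => y - y ^ 3 / 6 + y ^ 5 / 120 - sin y)
    (fun y => 1 - y ^ 2 / 2 + y ^ 4 / 24 - cos y)
    (fun y => by
      have := (((hasDerivAt_id y).sub ((hasDerivAt_pow 3 y).div_const 6)).add
        ((hasDerivAt_pow 5 y).div_const 120)).sub (hasDerivAt_sin y)
      refine this.congr_deriv ?_; ring)
    (fun y hy => by nlinarith [gCC_cos_le_quartic hy]) hx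
  simp at h; linarith

lemma gCC_sextic_le_cos {x : ℝ} (hx : 0 ≤ x) :
    1 - x ^ 2 / 2 + x ^ 4 / 24 - x ^ 6 / 720 ≤ cos x := by
  have h := gCC_mono_aux (fun y => cos y - 1 + y ^ 2 / 2 - y ^ 4 / 24 + y ^ 6 / 720)
    (fun y => -sin y + y - y ^ 3 / 6 + y ^ 5 / 120)
    (fun y => by
      have := ((((hasDerivAt_cos y).sub_const 1).add ((hasDerivAt_pow 2 y).div_const 2)).sub
        ((hasDerivAt_pow 4 y).div_const 24)).add ((hasDerivAt_pow 6 y).div_const 720)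
      refine this.congr_deriv ?_; ring)
    (fun y hy => by nlinarith [gCC_sin_le_quintic hy]) hx
  simp at h; linarith

lemma gCC_poly1 {x : ℝ} (h0 : 0 ≤ x) (h4 : x ≤ 4) :
    (1.07 : ℝ) ^ 2 * (x ^ 3 / 6) ^ 2 ≤ x ^ 6 / 12 - x ^ 8 / 360 := by
  have hx2 : x ^ 2 ≤ 16 := by nlinarith
  have h8 : x ^ 8 ≤ 16 * x ^ 6 := by
    nlinarith [mul_le_mul_of_nonneg_left hx2 (pow_nonneg h0 6)]
  nlinarith [pow_nonneg h0 6]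

lemma gCC_poly2 {x : ℝ} (h4 : 4 ≤ x) (h63 : x ≤ 6.3) :
    (1.07 : ℝ) ^ 2 * (x + 1) ^ 2 ≤ x ^ 4 - 4 * x ^ 2 := by
  have hx2 : (16 : ℝ) ≤ x ^ 2 := by nlinarith
  have h16 : 16 * x ^ 2 ≤ x ^ 4 := by
    nlinarith [mul_le_mul_of_nonneg_right hx2 (sq_nonneg x)]
  nlinarith [sq_nonneg x]

/-- The key trigonometric inequality on `(0, 2π]`. -/
lemma gCC_key_ineq {ν : ℝ} (h0 : 0 < ν) (h2 : ν ≤ 2 * π) :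
    ((12 - π ^ 2) / 2) ^ 2 * (ν - sin ν) ^ 2 ≤ ν ^ 4 - 2 * ν ^ 2 * (1 - cos ν) := by
  have hπ1 : π > 3.141592 := pi_gt_d6
  have hπ2 : π < 3.15 := by linarith [pi_lt_d2]
  set k : ℝ := (12 - π ^ 2) / 2 with hk
  have hk0 : 0 ≤ k := by nlinarith
  have hk1 : k ≤ 1.07 := by nlinarith
  have h1 : k ^ 2 ≤ (1.07 : ℝ) ^ 2 := by nlinarith
  have ht0 : 0 ≤ ν - sin ν := by linarith [sin_le h0.le]
  rcases le_or_gt ν 4 with h4 | h4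
  · have ht1 : ν - sin ν ≤ ν ^ 3 / 6 := gCC_sub_sin_le_cube h0.le
    have hc : 1 - ν ^ 2 / 2 + ν ^ 4 / 24 - ν ^ 6 / 720 ≤ cos ν := gCC_sextic_le_cos h0.le
    have h2' : (ν - sin ν) ^ 2 ≤ (ν ^ 3 / 6) ^ 2 := by nlinarith
    have hsq : k ^ 2 * (ν - sin ν) ^ 2 ≤ (1.07 : ℝ) ^ 2 * (ν ^ 3 / 6) ^ 2 :=
      calc k ^ 2 * (ν - sin ν) ^ 2 ≤ (1.07 : ℝ) ^ 2 * (ν - sin ν) ^ 2 :=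
            mul_le_mul_of_nonneg_right h1 (sq_nonneg _)
        _ ≤ (1.07 : ℝ) ^ 2 * (ν ^ 3 / 6) ^ 2 :=
            mul_le_mul_of_nonneg_left h2' (by norm_num)
    have hrhs : ν ^ 6 / 12 - ν ^ 8 / 360 ≤ ν ^ 4 - 2 * ν ^ 2 * (1 - cos ν) := by
      nlinarith [mul_le_mul_of_nonneg_left hc (show (0:ℝ) ≤ 2 * ν ^ 2 by positivity)]
    linarith [gCC_poly1 h0.le h4]
  · have h63 : ν ≤ 6.3 := by linarith
    have ht1 : ν - sin ν ≤ ν + 1 := by linarith [neg_one_le_sin ν]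
    have hc : -1 ≤ cos ν := neg_one_le_cos ν
    have h2' : (ν - sin ν) ^ 2 ≤ (ν + 1) ^ 2 := by nlinarith
    have hsq : k ^ 2 * (ν - sin ν) ^ 2 ≤ (1.07 : ℝ) ^ 2 * (ν + 1) ^ 2 :=
      calc k ^ 2 * (ν - sin ν) ^ 2 ≤ (1.07 : ℝ) ^ 2 * (ν - sin ν) ^ 2 :=
            mul_le_mul_of_nonneg_right h1 (sq_nonneg _)
        _ ≤ (1.07 : ℝ) ^ 2 * (ν + 1) ^ 2 :=
            mul_le_mul_of_nonneg_left h2' (by norm_num)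
    have hrhs : ν ^ 4 - 4 * ν ^ 2 ≤ ν ^ 4 - 2 * ν ^ 2 * (1 - cos ν) := by
      have := mul_le_mul_of_nonneg_left (show 1 - cos ν ≤ 2 by linarith)
        (show (0:ℝ) ≤ 2 * ν ^ 2 by positivity)
      linarith
    linarith [gCC_poly2 h4.le h63]

/-- `gCC` is an even function of `ν`. -/
lemma gCC_neg (Q p θ ν : ℝ) : gCC Q p θ (-ν) = gCC Q p θ ν := by
  unfold gCC
  by_cases h : ν = 0
  · simp [h]
  · rw [if_neg (neg_ne_zero.mpr h), if_neg h]
    rw [show (-ν) - Real.sin (-ν) = -(ν - Real.sin ν) by rw [Real.sin_neg]; ring,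
      Real.cos_neg, neg_sq, neg_div, div_neg]
    ring

lemma gCC_le_pos (Q p θ : ℝ) (hQ : 2 < Q) (hp : 2 ≤ p) (hθ : 0 ≤ θ)
    (hQθ : 4 * p * θ ≤ Q * (12 - Real.pi ^ 2)) {ν : ℝ} (h0 : 0 < ν) (h2 : ν ≤ 2 * π) :
    gCC Q p θ ν ≤ (Q / (Q - 2)) ^ 2 := by
  have hνne : ν ≠ 0 := h0.ne'
  rw [gCC, if_neg hνne]
  have hs : (0:ℝ) < Q - 2 := by linarith
  have hsne : Q - 2 ≠ 0 := hs.ne'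
  set B : ℝ := 2 * p * θ with hB
  have hB0 : 0 ≤ B := by positivity
  set k : ℝ := (12 - π ^ 2) / 2 with hk
  have hBk : B ≤ k * Q := by rw [hB, hk]; linarith
  have hk0 : 0 ≤ k := by
    have : (0:ℝ) < Q := by linarith
    nlinarith
  have hQ0 : (0:ℝ) < Q := by linarith
  have key := gCC_key_ineq h0 h2
  have ht0 : 0 ≤ ν - sin ν := by linarith [sin_le h0.le]
  have hc0 : 0 ≤ 1 - cos ν := by linarith [cos_le_one ν]
  have hB2 : B ^ 2 ≤ k ^ 2 * Q ^ 2 := by nlinarith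
  have hmain : 2 * Q ^ 2 * ν ^ 2 * (1 - cos ν) + B ^ 2 * (ν - sin ν) ^ 2
      - 2 * B * Q * (ν - sin ν) * (1 - cos ν) * ν ≤ Q ^ 2 * ν ^ 4 := by
    have h1 : B ^ 2 * (ν - sin ν) ^ 2 ≤ k ^ 2 * Q ^ 2 * (ν - sin ν) ^ 2 :=
      mul_le_mul_of_nonneg_right hB2 (sq_nonneg _)
    rw [← hk] at key
    have h2' : k ^ 2 * Q ^ 2 * (ν - sin ν) ^ 2 ≤ Q ^ 2 * (ν ^ 4 - 2 * ν ^ 2 * (1 - cos ν)) := by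
      have := mul_le_mul_of_nonneg_left key (sq_nonneg Q)
      nlinarith [this]
    have h3 : 0 ≤ 2 * B * Q * (ν - sin ν) * (1 - cos ν) * ν := by positivity
    nlinarith [h1, h2', h3]
  rw [show 2 * (Q / (Q - 2)) ^ 2 * ((1 - Real.cos ν) / ν ^ 2)
      + (2 * p * θ / (Q - 2)) ^ 2 * ((ν - Real.sin ν) / ν ^ 2) ^ 2
      - (4 * p * θ * Q / (Q - 2) ^ 2) * ((ν - Real.sin ν) / ν ^ 2) * ((1 - Real.cos ν) / ν)
      = (2 * Q ^ 2 * ν ^ 2 * (1 - cos ν) + B ^ 2 * (ν - sin ν) ^ 2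
        - 2 * B * Q * (ν - sin ν) * (1 - cos ν) * ν) / ((Q - 2) ^ 2 * ν ^ 4) by
    rw [hB]; field_simp; ring]
  rw [show (Q / (Q - 2)) ^ 2 = Q ^ 2 * ν ^ 4 / ((Q - 2) ^ 2 * ν ^ 4) by
    field_simp]
  rw [div_le_div_iff₀ (by positivity) (by positivity)]
  exact mul_le_mul_of_nonneg_right hmain (by positivity)

/-- If `Q > 2`, `p ≥ 2`, `θ ≥ 0` and `Q(12 - π²) ≥ 4pθ`, then the supremum of `g`
on `[-2π, 2π]` is `(Q/(Q-2))²`, attained at `ν = 0`. -/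
theorem gCC_sup (Q p θ : ℝ) (hQ : 2 < Q) (hp : 2 ≤ p) (hθ : 0 ≤ θ)
    (hQθ : 4 * p * θ ≤ Q * (12 - Real.pi ^ 2)) :
    gCC Q p θ 0 = (Q / (Q - 2)) ^ 2
    ∧ ∀ ν ∈ Set.Icc (-(2 * Real.pi)) (2 * Real.pi), gCC Q p θ ν ≤ gCC Q p θ 0 := by
  have h00 : gCC Q p θ 0 = (Q / (Q - 2)) ^ 2 := by rw [gCC, if_pos rfl]
  refine ⟨h00, fun ν hν => ?_⟩
  rw [h00]
  rcases lt_trichotomy ν 0 with h | h | h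
  · rw [← gCC_neg]
    exact gCC_le_pos Q p θ hQ hp hθ hQθ (by linarith) (by linarith [hν.1])
  · rw [h, h00]
  · exact gCC_le_pos Q p θ hQ hp hθ hQθ h hν.2
end
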